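/- For any finite weighted set (𝒮, w), 𝒮 ⊂ U(d), with ∑ₓ w(x) = 1, and any t ≥ 1: ∑_{x,y∈𝒮} w(x)w(y) |tr(U(x)†U(y))|^{2t} ≥ ∫∫ dμ(U)dμ(V) |tr(U†V)|^{2t} = ∫ dμ(U)|tr(U)|^{2t}, with equality iff (𝒮, w) is a weighted unitary t-design. -/

import Mathlib

open MeasureTheory Matrix

/-- The `t`-th moment kernel `U^{⊗t} ⊗ (U^{⊗t})†` of a matrix `U`, written entrywise. -/
noncomputable def mom (d t : ℕ) (U : Matrix (Fin d) (Fin d) ℂ)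
    (p q : (Fin t → Fin d) × (Fin t → Fin d)) : ℂ :=
  (∏ i, U (p.1 i) (q.1 i)) * (starRingEnd ℂ) (∏ i, U (q.2 i) (p.2 i))

section Aux

lemma sum_swap3 {α β γ M : Type*} [AddCommMonoid M] (s1 : Finset α) (s2 : Finset β)
    (s3 : Finset γ) (f : α → β → γ → M) :
    ∑ p ∈ s1, ∑ q ∈ s2, ∑ x ∈ s3, f p q x = ∑ x ∈ s3, ∑ p ∈ s1, ∑ q ∈ s2, f p q x :=
  calc ∑ p ∈ s1, ∑ q ∈ s2, ∑ x ∈ s3, f p q x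
      = ∑ p ∈ s1, ∑ x ∈ s3, ∑ q ∈ s2, f p q x :=
        Finset.sum_congr rfl fun p _ => Finset.sum_comm
    _ = ∑ x ∈ s3, ∑ p ∈ s1, ∑ q ∈ s2, f p q x := Finset.sum_comm

lemma sum_swap4 {α β γ δ M : Type*} [AddCommMonoid M] (s1 : Finset α) (s2 : Finset β)
    (s3 : Finset γ) (s4 : Finset δ) (f : α → β → γ → δ → M) :
    ∑ p ∈ s1, ∑ q ∈ s2, ∑ x ∈ s3, ∑ y ∈ s4, f p q x y
      = ∑ x ∈ s3, ∑ y ∈ s4, ∑ p ∈ s1, ∑ q ∈ s2, f p q x y :=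
  calc ∑ p ∈ s1, ∑ q ∈ s2, ∑ x ∈ s3, ∑ y ∈ s4, f p q x y
      = ∑ x ∈ s3, ∑ p ∈ s1, ∑ q ∈ s2, ∑ y ∈ s4, f p q x y :=
        sum_swap3 s1 s2 s3 (fun p q x => ∑ y ∈ s4, f p q x y)
    _ = ∑ x ∈ s3, ∑ y ∈ s4, ∑ p ∈ s1, ∑ q ∈ s2, f p q x y :=
        Finset.sum_congr rfl fun x _ =>
          sum_swap3 s1 s2 s4 (fun p q y => f p q x y)

lemma sum_prod_eq_pow {d t : ℕ} (c : Fin d → Fin d → ℂ) :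
    ∑ f : Fin t → Fin d, ∑ g : Fin t → Fin d, ∏ i, c (f i) (g i)
      = (∑ a, ∑ b, c a b) ^ t := by
  rw [← Fintype.sum_prod_type' (f := c), Fintype.sum_pow,
    ← Fintype.sum_prod_type' (f := fun f g : Fin t → Fin d => ∏ i, c (f i) (g i))]
  exact (Fintype.sum_equiv (Equiv.arrowProdEquivProdArrow (Fin t) (fun _ => Fin d) (fun _ => Fin d))
    (fun h => ∏ i, c (h i).1 (h i).2) (fun fg => ∏ i, c (fg.1 i) (fg.2 i))
    (fun h => rfl)).symm

lemma mom_expand {d t : ℕ} (U V : Matrix (Fin d) (Fin d) ℂ) :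
    ∑ p : (Fin t → Fin d) × (Fin t → Fin d), ∑ q : (Fin t → Fin d) × (Fin t → Fin d),
        (starRingEnd ℂ) (mom d t U p q) * mom d t V p q
      = ((‖(Uᴴ * V).trace‖ ^ (2 * t) : ℝ) : ℂ) := by
  have key : ∀ p q : (Fin t → Fin d) × (Fin t → Fin d),
      (starRingEnd ℂ) (mom d t U p q) * mom d t V p q
      = (∏ i, (starRingEnd ℂ) (U (p.1 i) (q.1 i)) * V (p.1 i) (q.1 i))
        * ∏ i, U (q.2 i) (p.2 i) * (starRingEnd ℂ) (V (q.2 i) (p.2 i)) := by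
    intro p q
    simp only [mom, _root_.map_mul, map_prod, Complex.conj_conj, Finset.prod_mul_distrib]
    ring
  have htr : (Uᴴ * V).trace = ∑ a, ∑ b, (starRingEnd ℂ) (U a b) * V a b := by
    rw [Finset.sum_comm]
    simp [Matrix.trace, Matrix.diag, Matrix.mul_apply, Matrix.conjTranspose_apply]
  have htr2 : (starRingEnd ℂ) ((Uᴴ * V).trace) = ∑ a, ∑ b, U b a * (starRingEnd ℂ) (V b a) := by
    rw [htr, map_sum, Finset.sum_comm]
    simp [map_sum, mul_comm]
  calc ∑ p : (Fin t → Fin d) × (Fin t → Fin d), ∑ q : (Fin t → Fin d) × (Fin t → Fin d),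
        (starRingEnd ℂ) (mom d t U p q) * mom d t V p q
      = ∑ p : (Fin t → Fin d) × (Fin t → Fin d), ∑ q : (Fin t → Fin d) × (Fin t → Fin d),
          (∏ i, (starRingEnd ℂ) (U (p.1 i) (q.1 i)) * V (p.1 i) (q.1 i))
            * ∏ i, U (q.2 i) (p.2 i) * (starRingEnd ℂ) (V (q.2 i) (p.2 i)) :=
        Finset.sum_congr rfl fun p _ => Finset.sum_congr rfl fun q _ => key p q
    _ = ∑ p1 : Fin t → Fin d, ∑ p2 : Fin t → Fin d, ∑ q1 : Fin t → Fin d, ∑ q2 : Fin t → Fin d,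
          (∏ i, (starRingEnd ℂ) (U (p1 i) (q1 i)) * V (p1 i) (q1 i))
            * ∏ i, U (q2 i) (p2 i) * (starRingEnd ℂ) (V (q2 i) (p2 i)) := by
        simp only [Fintype.sum_prod_type]
    _ = ∑ p1 : Fin t → Fin d, ∑ q1 : Fin t → Fin d, ∑ p2 : Fin t → Fin d, ∑ q2 : Fin t → Fin d,
          (∏ i, (starRingEnd ℂ) (U (p1 i) (q1 i)) * V (p1 i) (q1 i))
            * ∏ i, U (q2 i) (p2 i) * (starRingEnd ℂ) (V (q2 i) (p2 i)) :=
        Finset.sum_congr rfl fun p1 _ => Finset.sum_comm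
    _ = (∑ p1 : Fin t → Fin d, ∑ q1 : Fin t → Fin d,
          ∏ i, (starRingEnd ℂ) (U (p1 i) (q1 i)) * V (p1 i) (q1 i))
        * (∑ p2 : Fin t → Fin d, ∑ q2 : Fin t → Fin d,
          ∏ i, U (q2 i) (p2 i) * (starRingEnd ℂ) (V (q2 i) (p2 i))) := by
        simp only [← Finset.mul_sum, ← Finset.sum_mul]
    _ = ((Uᴴ * V).trace) ^ t * ((starRingEnd ℂ) ((Uᴴ * V).trace)) ^ t := by
        rw [sum_prod_eq_pow (fun a b => (starRingEnd ℂ) (U a b) * V a b),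
          sum_prod_eq_pow (fun a b => U b a * (starRingEnd ℂ) (V b a)), htr2, htr]
    _ = ((‖(Uᴴ * V).trace‖ ^ (2 * t) : ℝ) : ℂ) := by
        rw [pow_mul, Complex.sq_norm, Complex.ofReal_pow, ← Complex.mul_conj, mul_pow]

lemma mom_continuous {d t : ℕ} (p q : (Fin t → Fin d) × (Fin t → Fin d)) :
    Continuous (fun U : Matrix.unitaryGroup (Fin d) ℂ =>
      mom d t (U : Matrix (Fin d) (Fin d) ℂ) p q) := by
  unfold mom
  have hc : ∀ i j, Continuous (fun U : Matrix.unitaryGroup (Fin d) ℂ =>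
      (U : Matrix (Fin d) (Fin d) ℂ) i j) :=
    fun i j => (continuous_apply j).comp ((continuous_apply i).comp continuous_subtype_val)
  exact (continuous_finset_prod _ fun i _ => hc _ _).mul
    (continuous_star.comp (continuous_finset_prod _ fun i _ => hc _ _))

lemma mom_norm_le {d t : ℕ} (x : Matrix.unitaryGroup (Fin d) ℂ)
    (p q : (Fin t → Fin d) × (Fin t → Fin d)) :
    ‖mom d t (x : Matrix (Fin d) (Fin d) ℂ) p q‖ ≤ 1 := by
  have hb : ∀ f g : Fin t → Fin d,
      ‖∏ i, (x : Matrix (Fin d) (Fin d) ℂ) (f i) (g i)‖ ≤ 1 := by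
    intro f g
    rw [norm_prod]
    exact Finset.prod_le_one (fun i _ => norm_nonneg _)
      (fun i _ => entry_norm_bound_of_unitary x.2 _ _)
  rw [mom, norm_mul, RCLike.norm_conj]
  exact mul_le_one₀ (hb _ _) (norm_nonneg _) (hb _ _)

variable {d t : ℕ} [MeasurableSpace (Matrix.unitaryGroup (Fin d) ℂ)]
  [BorelSpace (Matrix.unitaryGroup (Fin d) ℂ)]
  (μ : Measure (Matrix.unitaryGroup (Fin d) ℂ)) [μ.IsHaarMeasure] [IsProbabilityMeasure μ]

lemma mom_integrable (p q : (Fin t → Fin d) × (Fin t → Fin d)) :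
    Integrable (fun U : Matrix.unitaryGroup (Fin d) ℂ =>
      mom d t (U : Matrix (Fin d) (Fin d) ℂ) p q) μ :=
  ⟨(mom_continuous p q).aestronglyMeasurable,
    HasFiniteIntegral.of_bounded (C := 1) (.of_forall fun U => mom_norm_le U p q)⟩

lemma mom_conj_integrable (p q : (Fin t → Fin d) × (Fin t → Fin d)) :
    Integrable (fun U : Matrix.unitaryGroup (Fin d) ℂ =>
      (starRingEnd ℂ) (mom d t (U : Matrix (Fin d) (Fin d) ℂ) p q)) μ :=
  ⟨(continuous_star.comp (mom_continuous p q)).aestronglyMeasurable,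
    HasFiniteIntegral.of_bounded (C := 1)
      (.of_forall fun U => by rw [RCLike.norm_conj]; exact mom_norm_le U p q)⟩

lemma inv_int (x : Matrix.unitaryGroup (Fin d) ℂ) :
    ∫ U : Matrix.unitaryGroup (Fin d) ℂ, ‖((x : Matrix (Fin d) (Fin d) ℂ)ᴴ
        * (U : Matrix (Fin d) (Fin d) ℂ)).trace‖ ^ (2 * t) ∂μ
      = ∫ U : Matrix.unitaryGroup (Fin d) ℂ,
          ‖(U : Matrix (Fin d) (Fin d) ℂ).trace‖ ^ (2 * t) ∂μ := by
  have h : ∀ U : Matrix.unitaryGroup (Fin d) ℂ,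
      (x : Matrix (Fin d) (Fin d) ℂ)ᴴ * (U : Matrix (Fin d) (Fin d) ℂ)
      = ((x⁻¹ * U : Matrix.unitaryGroup (Fin d) ℂ) : Matrix (Fin d) (Fin d) ℂ) := by
    intro U
    show _ = ((x⁻¹ : Matrix.unitaryGroup (Fin d) ℂ) : Matrix (Fin d) (Fin d) ℂ)
      * (U : Matrix (Fin d) (Fin d) ℂ)
    simp [Matrix.UnitaryGroup.inv_apply, Matrix.star_eq_conjTranspose]
  simp_rw [h]
  exact integral_mul_left_eq_self (fun U : Matrix.unitaryGroup (Fin d) ℂ =>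
    ‖(U : Matrix (Fin d) (Fin d) ℂ).trace‖ ^ (2 * t)) x⁻¹

lemma star_lemma (x : Matrix.unitaryGroup (Fin d) ℂ) :
    ∑ p : (Fin t → Fin d) × (Fin t → Fin d), ∑ q : (Fin t → Fin d) × (Fin t → Fin d),
        (starRingEnd ℂ) (mom d t (x : Matrix (Fin d) (Fin d) ℂ) p q)
        * (∫ U : Matrix.unitaryGroup (Fin d) ℂ,
            mom d t (U : Matrix (Fin d) (Fin d) ℂ) p q ∂μ)
      = ((∫ U : Matrix.unitaryGroup (Fin d) ℂ,
          ‖(U : Matrix (Fin d) (Fin d) ℂ).trace‖ ^ (2 * t) ∂μ : ℝ) : ℂ) := by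
  calc ∑ p : (Fin t → Fin d) × (Fin t → Fin d), ∑ q : (Fin t → Fin d) × (Fin t → Fin d),
        (starRingEnd ℂ) (mom d t (x : Matrix (Fin d) (Fin d) ℂ) p q)
        * (∫ U : Matrix.unitaryGroup (Fin d) ℂ, mom d t (U : Matrix (Fin d) (Fin d) ℂ) p q ∂μ)
      = ∫ U : Matrix.unitaryGroup (Fin d) ℂ,
          ∑ p : (Fin t → Fin d) × (Fin t → Fin d), ∑ q : (Fin t → Fin d) × (Fin t → Fin d),
            (starRingEnd ℂ) (mom d t (x : Matrix (Fin d) (Fin d) ℂ) p q)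
            * mom d t (U : Matrix (Fin d) (Fin d) ℂ) p q ∂μ := by
        rw [integral_finset_sum _ (fun p _ => integrable_finset_sum _
          (fun q _ => (mom_integrable μ p q).const_mul _))]
        refine Finset.sum_congr rfl fun p _ => ?_
        rw [integral_finset_sum _ (fun q _ => (mom_integrable μ p q).const_mul _)]
        exact Finset.sum_congr rfl fun q _ => (integral_const_mul _ _).symm
    _ = ∫ U : Matrix.unitaryGroup (Fin d) ℂ, ((‖((x : Matrix (Fin d) (Fin d) ℂ)ᴴ
          * (U : Matrix (Fin d) (Fin d) ℂ)).trace‖ ^ (2 * t) : ℝ) : ℂ) ∂μ :=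
        integral_congr_ae (.of_forall fun U =>
          mom_expand (x : Matrix (Fin d) (Fin d) ℂ) (U : Matrix (Fin d) (Fin d) ℂ))
    _ = ((∫ U : Matrix.unitaryGroup (Fin d) ℂ, ‖((x : Matrix (Fin d) (Fin d) ℂ)ᴴ
          * (U : Matrix (Fin d) (Fin d) ℂ)).trace‖ ^ (2 * t) ∂μ : ℝ) : ℂ) := integral_ofReal
    _ = _ := by rw [inv_int]

lemma Tss (s : Finset (Matrix.unitaryGroup (Fin d) ℂ)) (w : Matrix.unitaryGroup (Fin d) ℂ → ℝ) :
    ∑ p : (Fin t → Fin d) × (Fin t → Fin d), ∑ q : (Fin t → Fin d) × (Fin t → Fin d),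
        (starRingEnd ℂ) (∑ x ∈ s, (w x : ℂ) * mom d t (x : Matrix (Fin d) (Fin d) ℂ) p q)
        * (∑ y ∈ s, (w y : ℂ) * mom d t (y : Matrix (Fin d) (Fin d) ℂ) p q)
      = ((∑ x ∈ s, ∑ y ∈ s, w x * w y * ‖((x : Matrix (Fin d) (Fin d) ℂ)ᴴ
          * (y : Matrix (Fin d) (Fin d) ℂ)).trace‖ ^ (2 * t) : ℝ) : ℂ) := by
  calc ∑ p : (Fin t → Fin d) × (Fin t → Fin d), ∑ q : (Fin t → Fin d) × (Fin t → Fin d),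
        (starRingEnd ℂ) (∑ x ∈ s, (w x : ℂ) * mom d t (x : Matrix (Fin d) (Fin d) ℂ) p q)
        * (∑ y ∈ s, (w y : ℂ) * mom d t (y : Matrix (Fin d) (Fin d) ℂ) p q)
      = ∑ p : (Fin t → Fin d) × (Fin t → Fin d), ∑ q : (Fin t → Fin d) × (Fin t → Fin d),
          ∑ x ∈ s, ∑ y ∈ s, ((w x * w y : ℝ) : ℂ)
            * ((starRingEnd ℂ) (mom d t (x : Matrix (Fin d) (Fin d) ℂ) p q)
              * mom d t (y : Matrix (Fin d) (Fin d) ℂ) p q) := by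
        refine Finset.sum_congr rfl fun p _ => Finset.sum_congr rfl fun q _ => ?_
        rw [map_sum, Finset.sum_mul_sum]
        refine Finset.sum_congr rfl fun x _ => Finset.sum_congr rfl fun y _ => ?_
        rw [_root_.map_mul, Complex.conj_ofReal]
        push_cast
        ring
    _ = ∑ x ∈ s, ∑ y ∈ s, ((w x * w y : ℝ) : ℂ)
          * ∑ p : (Fin t → Fin d) × (Fin t → Fin d), ∑ q : (Fin t → Fin d) × (Fin t → Fin d),
            (starRingEnd ℂ) (mom d t (x : Matrix (Fin d) (Fin d) ℂ) p q)
              * mom d t (y : Matrix (Fin d) (Fin d) ℂ) p q := by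
        rw [sum_swap4]
        simp only [← Finset.mul_sum]
    _ = ∑ x ∈ s, ∑ y ∈ s, ((w x * w y : ℝ) : ℂ)
          * ((‖((x : Matrix (Fin d) (Fin d) ℂ)ᴴ
            * (y : Matrix (Fin d) (Fin d) ℂ)).trace‖ ^ (2 * t) : ℝ) : ℂ) := by
        refine Finset.sum_congr rfl fun x _ => Finset.sum_congr rfl fun y _ => ?_
        rw [mom_expand]
    _ = _ := by push_cast [mul_assoc]; rfl

variable {s : Finset (Matrix.unitaryGroup (Fin d) ℂ)} {w : Matrix.unitaryGroup (Fin d) ℂ → ℝ}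

lemma Tsmu (hwsum : ∑ x ∈ s, w x = 1) :
    ∑ p : (Fin t → Fin d) × (Fin t → Fin d), ∑ q : (Fin t → Fin d) × (Fin t → Fin d),
        (starRingEnd ℂ) (∑ x ∈ s, (w x : ℂ) * mom d t (x : Matrix (Fin d) (Fin d) ℂ) p q)
        * (∫ U : Matrix.unitaryGroup (Fin d) ℂ, mom d t (U : Matrix (Fin d) (Fin d) ℂ) p q ∂μ)
      = ((∫ U : Matrix.unitaryGroup (Fin d) ℂ,
          ‖(U : Matrix (Fin d) (Fin d) ℂ).trace‖ ^ (2 * t) ∂μ : ℝ) : ℂ) := by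
  calc ∑ p : (Fin t → Fin d) × (Fin t → Fin d), ∑ q : (Fin t → Fin d) × (Fin t → Fin d),
        (starRingEnd ℂ) (∑ x ∈ s, (w x : ℂ) * mom d t (x : Matrix (Fin d) (Fin d) ℂ) p q)
        * (∫ U : Matrix.unitaryGroup (Fin d) ℂ, mom d t (U : Matrix (Fin d) (Fin d) ℂ) p q ∂μ)
      = ∑ p : (Fin t → Fin d) × (Fin t → Fin d), ∑ q : (Fin t → Fin d) × (Fin t → Fin d),
          ∑ x ∈ s, (w x : ℂ) * ((starRingEnd ℂ) (mom d t (x : Matrix (Fin d) (Fin d) ℂ) p q)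
            * (∫ U : Matrix.unitaryGroup (Fin d) ℂ,
                mom d t (U : Matrix (Fin d) (Fin d) ℂ) p q ∂μ)) := by
        refine Finset.sum_congr rfl fun p _ => Finset.sum_congr rfl fun q _ => ?_
        rw [map_sum, Finset.sum_mul]
        refine Finset.sum_congr rfl fun x _ => ?_
        rw [_root_.map_mul, Complex.conj_ofReal, mul_assoc]
    _ = ∑ x ∈ s, (w x : ℂ)
          * ∑ p : (Fin t → Fin d) × (Fin t → Fin d), ∑ q : (Fin t → Fin d) × (Fin t → Fin d),
            (starRingEnd ℂ) (mom d t (x : Matrix (Fin d) (Fin d) ℂ) p q)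
            * (∫ U : Matrix.unitaryGroup (Fin d) ℂ,
                mom d t (U : Matrix (Fin d) (Fin d) ℂ) p q ∂μ) := by
        rw [sum_swap3]
        simp only [← Finset.mul_sum]
    _ = ∑ x ∈ s, (w x : ℂ) * ((∫ U : Matrix.unitaryGroup (Fin d) ℂ,
          ‖(U : Matrix (Fin d) (Fin d) ℂ).trace‖ ^ (2 * t) ∂μ : ℝ) : ℂ) := by
        refine Finset.sum_congr rfl fun x _ => ?_
        rw [star_lemma μ x]
    _ = _ := by
        rw [← Finset.sum_mul, ← Complex.ofReal_sum, hwsum, Complex.ofReal_one, one_mul]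

lemma Tmus (hwsum : ∑ x ∈ s, w x = 1) :
    ∑ p : (Fin t → Fin d) × (Fin t → Fin d), ∑ q : (Fin t → Fin d) × (Fin t → Fin d),
        (starRingEnd ℂ) (∫ U : Matrix.unitaryGroup (Fin d) ℂ,
            mom d t (U : Matrix (Fin d) (Fin d) ℂ) p q ∂μ)
        * (∑ x ∈ s, (w x : ℂ) * mom d t (x : Matrix (Fin d) (Fin d) ℂ) p q)
      = ((∫ U : Matrix.unitaryGroup (Fin d) ℂ,
          ‖(U : Matrix (Fin d) (Fin d) ℂ).trace‖ ^ (2 * t) ∂μ : ℝ) : ℂ) := by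
  have h : ∑ p : (Fin t → Fin d) × (Fin t → Fin d), ∑ q : (Fin t → Fin d) × (Fin t → Fin d),
      (starRingEnd ℂ) (∫ U : Matrix.unitaryGroup (Fin d) ℂ,
          mom d t (U : Matrix (Fin d) (Fin d) ℂ) p q ∂μ)
      * (∑ x ∈ s, (w x : ℂ) * mom d t (x : Matrix (Fin d) (Fin d) ℂ) p q)
      = (starRingEnd ℂ) (∑ p : (Fin t → Fin d) × (Fin t → Fin d),
          ∑ q : (Fin t → Fin d) × (Fin t → Fin d),
          (starRingEnd ℂ) (∑ x ∈ s, (w x : ℂ) * mom d t (x : Matrix (Fin d) (Fin d) ℂ) p q)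
          * (∫ U : Matrix.unitaryGroup (Fin d) ℂ,
              mom d t (U : Matrix (Fin d) (Fin d) ℂ) p q ∂μ)) := by
    rw [map_sum]
    refine Finset.sum_congr rfl fun p _ => ?_
    rw [map_sum]
    refine Finset.sum_congr rfl fun q _ => ?_
    rw [_root_.map_mul, Complex.conj_conj]
    ring
  rw [h, Tsmu μ hwsum, Complex.conj_ofReal]

lemma Tmumu :
    ∑ p : (Fin t → Fin d) × (Fin t → Fin d), ∑ q : (Fin t → Fin d) × (Fin t → Fin d),
        (starRingEnd ℂ) (∫ U : Matrix.unitaryGroup (Fin d) ℂ,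
            mom d t (U : Matrix (Fin d) (Fin d) ℂ) p q ∂μ)
        * (∫ U : Matrix.unitaryGroup (Fin d) ℂ,
            mom d t (U : Matrix (Fin d) (Fin d) ℂ) p q ∂μ)
      = ((∫ U : Matrix.unitaryGroup (Fin d) ℂ,
          ‖(U : Matrix (Fin d) (Fin d) ℂ).trace‖ ^ (2 * t) ∂μ : ℝ) : ℂ) := by
  calc ∑ p : (Fin t → Fin d) × (Fin t → Fin d), ∑ q : (Fin t → Fin d) × (Fin t → Fin d),
        (starRingEnd ℂ) (∫ U : Matrix.unitaryGroup (Fin d) ℂ,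
            mom d t (U : Matrix (Fin d) (Fin d) ℂ) p q ∂μ)
        * (∫ U : Matrix.unitaryGroup (Fin d) ℂ,
            mom d t (U : Matrix (Fin d) (Fin d) ℂ) p q ∂μ)
      = ∫ V : Matrix.unitaryGroup (Fin d) ℂ,
          ∑ p : (Fin t → Fin d) × (Fin t → Fin d), ∑ q : (Fin t → Fin d) × (Fin t → Fin d),
            (starRingEnd ℂ) (mom d t (V : Matrix (Fin d) (Fin d) ℂ) p q)
            * (∫ U : Matrix.unitaryGroup (Fin d) ℂ,
                mom d t (U : Matrix (Fin d) (Fin d) ℂ) p q ∂μ) ∂μ := by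
        rw [integral_finset_sum _ (fun p _ => integrable_finset_sum _
          (fun q _ => (mom_conj_integrable μ p q).mul_const _))]
        refine Finset.sum_congr rfl fun p _ => ?_
        rw [integral_finset_sum _ (fun q _ => (mom_conj_integrable μ p q).mul_const _)]
        refine Finset.sum_congr rfl fun q _ => ?_
        rw [← integral_conj, ← integral_mul_const]
    _ = ∫ V : Matrix.unitaryGroup (Fin d) ℂ,
          ((∫ U : Matrix.unitaryGroup (Fin d) ℂ,
            ‖(U : Matrix (Fin d) (Fin d) ℂ).trace‖ ^ (2 * t) ∂μ : ℝ) : ℂ) ∂μ :=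
        integral_congr_ae (.of_forall fun V => star_lemma μ V)
    _ = _ := by simp

end Aux

theorem welch_bound_unitary (d t : ℕ) (hd : 0 < d) (ht : 1 ≤ t)
    [MeasurableSpace (Matrix.unitaryGroup (Fin d) ℂ)]
    [BorelSpace (Matrix.unitaryGroup (Fin d) ℂ)]
    (μ : Measure (Matrix.unitaryGroup (Fin d) ℂ)) [μ.IsHaarMeasure] [IsProbabilityMeasure μ]
    (s : Finset (Matrix.unitaryGroup (Fin d) ℂ)) (w : Matrix.unitaryGroup (Fin d) ℂ → ℝ)
    (hw : ∀ x ∈ s, 0 < w x) (hwsum : ∑ x ∈ s, w x = 1) :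
    (∫ U, ∫ V, ‖((U : Matrix (Fin d) (Fin d) ℂ)ᴴ * (V : Matrix (Fin d) (Fin d) ℂ)).trace‖ ^ (2 * t) ∂μ ∂μ
        = ∫ U, ‖(U : Matrix (Fin d) (Fin d) ℂ).trace‖ ^ (2 * t) ∂μ) ∧
    (∫ U, ‖(U : Matrix (Fin d) (Fin d) ℂ).trace‖ ^ (2 * t) ∂μ
        ≤ ∑ x ∈ s, ∑ y ∈ s,
            w x * w y * ‖((x : Matrix (Fin d) (Fin d) ℂ)ᴴ * (y : Matrix (Fin d) (Fin d) ℂ)).trace‖ ^ (2 * t)) ∧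
    ((∑ x ∈ s, ∑ y ∈ s,
          w x * w y * ‖((x : Matrix (Fin d) (Fin d) ℂ)ᴴ * (y : Matrix (Fin d) (Fin d) ℂ)).trace‖ ^ (2 * t)
        = ∫ U, ‖(U : Matrix (Fin d) (Fin d) ℂ).trace‖ ^ (2 * t) ∂μ) ↔
      (∀ p q, ∑ x ∈ s, (w x : ℂ) * mom d t (x : Matrix (Fin d) (Fin d) ℂ) p q
        = ∫ U, mom d t (U : Matrix (Fin d) (Fin d) ℂ) p q ∂μ)) := by
  set c : ℝ := ∫ U, ‖(U : Matrix (Fin d) (Fin d) ℂ).trace‖ ^ (2 * t) ∂μ with hcdef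
  set A : ℝ := ∑ x ∈ s, ∑ y ∈ s, w x * w y * ‖((x : Matrix (Fin d) (Fin d) ℂ)ᴴ
    * (y : Matrix (Fin d) (Fin d) ℂ)).trace‖ ^ (2 * t) with hAdef
  set Ms : (Fin t → Fin d) × (Fin t → Fin d) → (Fin t → Fin d) × (Fin t → Fin d) → ℂ :=
    fun p q => ∑ x ∈ s, (w x : ℂ) * mom d t (x : Matrix (Fin d) (Fin d) ℂ) p q with hMs
  set Mμ : (Fin t → Fin d) × (Fin t → Fin d) → (Fin t → Fin d) × (Fin t → Fin d) → ℂ :=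
    fun p q => ∫ U, mom d t (U : Matrix (Fin d) (Fin d) ℂ) p q ∂μ with hMμ
  set D : ℝ := ∑ p : (Fin t → Fin d) × (Fin t → Fin d),
    ∑ q : (Fin t → Fin d) × (Fin t → Fin d), Complex.normSq (Ms p q - Mμ p q) with hDdef
  have hns : ∀ z : ℂ, ((Complex.normSq z : ℝ) : ℂ) = (starRingEnd ℂ) z * z := fun z => by
    rw [mul_comm, Complex.mul_conj]
  have hcplx : (D : ℂ) = (A : ℂ) - (c : ℂ) := by
    calc (D : ℂ)
        = ∑ p : (Fin t → Fin d) × (Fin t → Fin d), ∑ q : (Fin t → Fin d) × (Fin t → Fin d),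
            ((starRingEnd ℂ) (Ms p q) * Ms p q - (starRingEnd ℂ) (Ms p q) * Mμ p q
              - ((starRingEnd ℂ) (Mμ p q) * Ms p q - (starRingEnd ℂ) (Mμ p q) * Mμ p q)) := by
          rw [hDdef]
          push_cast
          refine Finset.sum_congr rfl fun p _ => Finset.sum_congr rfl fun q _ => ?_
          rw [hns, map_sub]
          ring
      _ = (A : ℂ) - (c : ℂ) - ((c : ℂ) - (c : ℂ)) := by
          simp only [Finset.sum_sub_distrib]
          rw [hMs, hMμ, hAdef, hcdef]
          rw [Tss s w, Tsmu μ hwsum, Tmus μ hwsum, Tmumu μ]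
      _ = (A : ℂ) - (c : ℂ) := by ring
  have hreal : D = A - c := by exact_mod_cast hcplx
  have hD0 : 0 ≤ D :=
    Finset.sum_nonneg fun p _ => Finset.sum_nonneg fun q _ => Complex.normSq_nonneg _
  refine ⟨?_, by linarith, ?_⟩
  · have h1 : ∀ U : Matrix.unitaryGroup (Fin d) ℂ,
        ∫ V, ‖((U : Matrix (Fin d) (Fin d) ℂ)ᴴ
          * (V : Matrix (Fin d) (Fin d) ℂ)).trace‖ ^ (2 * t) ∂μ = c :=
      fun U => inv_int μ U
    rw [integral_congr_ae (.of_forall h1)]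
    simp
  · constructor
    · intro hA
      have hD : D = 0 := by rw [hreal, hA]; ring
      have hz : ∀ p ∈ (Finset.univ : Finset ((Fin t → Fin d) × (Fin t → Fin d))),
          ∑ q : (Fin t → Fin d) × (Fin t → Fin d), Complex.normSq (Ms p q - Mμ p q) = 0 :=
        (Finset.sum_eq_zero_iff_of_nonneg fun p _ =>
          Finset.sum_nonneg fun q _ => Complex.normSq_nonneg _).mp hD
      intro p q
      have hz2 := (Finset.sum_eq_zero_iff_of_nonneg fun q _ =>
        Complex.normSq_nonneg _).mp (hz p (Finset.mem_univ p)) q (Finset.mem_univ q)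
      have := Complex.normSq_eq_zero.mp hz2
      exact sub_eq_zero.mp this
    · intro hdes
      have hD : D = 0 := by
        rw [hDdef]
        refine Finset.sum_eq_zero fun p _ => Finset.sum_eq_zero fun q _ => ?_
        rw [show Ms p q - Mμ p q = 0 from sub_eq_zero.mpr (hdes p q)]
        simp
      linarith
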